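/- For every shape parameter λ < 0 and every x > 0, the Mills ratio of the skew normal distribution satisfies the upper bound (1 - F_λ(x)) / f_λ(x) < x^{-1} (1 - (λ²/(1+λ²)) · (1 + 1/((1+λ²) x²))^{-1}). -/

import Mathlib

open Real MeasureTheory Filter Topology

/-- Standard normal density. -/
noncomputable def stdPhi (x : ℝ) : ℝ := (Real.sqrt (2 * Real.pi))⁻¹ * Real.exp (-(x ^ 2) / 2)

/-- Standard normal cdf. -/
noncomputable def stdCdf (x : ℝ) : ℝ := ∫ t in Set.Iic x, stdPhi t

/-- Skew normal density with shape parameter l. -/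
noncomputable def snPdf (l x : ℝ) : ℝ := 2 * stdPhi x * stdCdf (l * x)

/-- Skew normal cdf with shape parameter l. -/
noncomputable def snCdf (l x : ℝ) : ℝ := ∫ t in Set.Iic x, snPdf l t

/-- Gumbel extreme value distribution function. -/
noncomputable def gumbel (x : ℝ) : ℝ := Real.exp (-Real.exp (-x))

open Set

lemma sqrt2pi_pos : 0 < Real.sqrt (2 * Real.pi) :=
  Real.sqrt_pos.2 (by positivity)

lemma stdPhi_pos (x : ℝ) : 0 < stdPhi x := by
  unfold stdPhi; positivity

lemma stdPhi_cont : Continuous stdPhi := by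
  unfold stdPhi; fun_prop

lemma stdPhi_eq (x : ℝ) :
    stdPhi x = (Real.sqrt (2 * Real.pi))⁻¹ * Real.exp (-(2⁻¹ : ℝ) * x ^ 2) := by
  unfold stdPhi; ring_nf

lemma integrable_stdPhi : Integrable stdPhi := by
  have h := (integrable_exp_neg_mul_sq (by norm_num : (0:ℝ) < 2⁻¹)).const_mul
    (Real.sqrt (2 * Real.pi))⁻¹
  exact h.congr (by
    filter_upwards with x
    rw [stdPhi_eq])

lemma integral_stdPhi : ∫ x, stdPhi x = 1 := by
  have : ∫ x, stdPhi x = (Real.sqrt (2 * Real.pi))⁻¹ * ∫ x, Real.exp (-(2⁻¹:ℝ) * x ^ 2) := by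
    rw [← integral_const_mul]
    congr 1 with x
    rw [stdPhi_eq]
  rw [this, integral_gaussian]
  have : Real.pi / 2⁻¹ = 2 * Real.pi := by ring
  rw [this, inv_mul_cancel₀ sqrt2pi_pos.ne']

lemma hasDerivAt_stdPhi (x : ℝ) : HasDerivAt stdPhi (-x * stdPhi x) x := by
  have h1 : HasDerivAt (fun y : ℝ => -(y ^ 2) / 2) (-x) x := by
    have := ((hasDerivAt_pow 2 x).neg).div_const 2
    exact this.congr_deriv (by norm_num; ring)
  have h2 := (h1.exp).const_mul (Real.sqrt (2 * Real.pi))⁻¹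
  exact h2.congr_deriv (by unfold stdPhi; ring)

lemma stdPhi_even (x : ℝ) : stdPhi (-x) = stdPhi x := by
  unfold stdPhi; ring_nf

lemma sq_tendsto_atTop : Tendsto (fun x : ℝ => x ^ 2) atTop atTop :=
  tendsto_pow_atTop two_ne_zero

lemma sq_tendsto_atBot : Tendsto (fun x : ℝ => x ^ 2) atBot atTop := by
  have h0 : Tendsto (fun x : ℝ => x ^ 2) atTop atTop := sq_tendsto_atTop
  have h := h0.comp tendsto_neg_atBot_atTop
  refine h.congr fun x => ?_
  simp [neg_pow]

lemma stdPhi_tendsto_aux {f : Filter ℝ} (h : Tendsto (fun x : ℝ => x ^ 2) f atTop) :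
    Tendsto stdPhi f (𝓝 0) := by
  have h1 : Tendsto (fun x : ℝ => -(x ^ 2) / 2) f atBot := by
    apply Tendsto.atBot_div_const (by norm_num)
    exact tendsto_neg_atBot_iff.2 h
  have h2 : Tendsto (fun x : ℝ => Real.exp (-(x ^ 2) / 2)) f (𝓝 0) :=
    Real.tendsto_exp_atBot.comp h1
  have h3 := h2.const_mul (Real.sqrt (2 * Real.pi))⁻¹
  rw [mul_zero] at h3
  exact h3

lemma stdPhi_tendsto_atBot : Tendsto stdPhi atBot (𝓝 0) := stdPhi_tendsto_aux sq_tendsto_atBot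

lemma stdPhi_tendsto_atTop : Tendsto stdPhi atTop (𝓝 0) := stdPhi_tendsto_aux sq_tendsto_atTop

lemma stdCdf_nonneg (x : ℝ) : 0 ≤ stdCdf x :=
  setIntegral_nonneg measurableSet_Iic fun t _ => (stdPhi_pos t).le

lemma stdCdf_le_one (x : ℝ) : stdCdf x ≤ 1 := by
  rw [← integral_stdPhi]
  exact setIntegral_le_integral integrable_stdPhi
    (Filter.Eventually.of_forall fun t => (stdPhi_pos t).le)

lemma stdCdf_pos (x : ℝ) : 0 < stdCdf x := by
  rw [stdCdf, setIntegral_pos_iff_support_of_nonneg_ae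
    (Filter.Eventually.of_forall fun t => (stdPhi_pos t).le)
    (integrable_stdPhi.integrableOn)]
  have hs : Function.support stdPhi = Set.univ := by
    ext t; simp [(stdPhi_pos t).ne']
  rw [hs, Set.univ_inter]
  simp

lemma hasDerivAt_stdCdf (x : ℝ) : HasDerivAt stdCdf (stdPhi x) x := by
  have key : ∀ u : ℝ, stdCdf u = stdCdf (x - 1) + ∫ t in (x-1)..u, stdPhi t := by
    intro u
    rw [← intervalIntegral.integral_Iic_sub_Iic integrable_stdPhi.integrableOn
      integrable_stdPhi.integrableOn]
    unfold stdCdf; ring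
  have h : HasDerivAt (fun u => stdCdf (x - 1) + ∫ t in (x-1)..u, stdPhi t) (stdPhi x) x := by
    refine HasDerivAt.const_add _ ?_
    exact intervalIntegral.integral_hasDerivAt_right
      integrable_stdPhi.intervalIntegrable
      (stdPhi_cont.stronglyMeasurable.stronglyMeasurableAtFilter)
      stdPhi_cont.continuousAt
  exact h.congr_of_eventuallyEq (Filter.Eventually.of_forall key)

lemma stdCdf_cont : Continuous stdCdf :=
  continuous_iff_continuousAt.2 fun x => (hasDerivAt_stdCdf x).continuousAt

lemma integrable_neg_mul_stdPhi : Integrable (fun t : ℝ => -t * stdPhi t) := by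
  have h := (integrable_mul_exp_neg_mul_sq (by norm_num : (0:ℝ) < 2⁻¹)).const_mul
    (Real.sqrt (2 * Real.pi))⁻¹
  refine (h.neg).congr (by
    filter_upwards with t
    simp only [Pi.neg_apply]
    rw [stdPhi_eq]; ring)

lemma integral_Iic_neg_mul_stdPhi (c : ℝ) :
    ∫ t in Iic c, -t * stdPhi t = stdPhi c := by
  have h := integral_Iic_of_hasDerivAt_of_tendsto' (f := stdPhi)
    (f' := fun t => -t * stdPhi t) (a := c)
    (fun t _ => hasDerivAt_stdPhi t)
    integrable_neg_mul_stdPhi.integrableOn stdPhi_tendsto_atBot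
  rw [h, sub_zero]

/-- Mills ratio upper bound for the normal, non-strict. -/
lemma stdCdf_neg_le (s : ℝ) (hs : 0 < s) : stdCdf (-s) ≤ stdPhi s / s := by
  have h1 : stdCdf (-s) ≤ ∫ t in Iic (-s), (-t / s) * stdPhi t := by
    refine setIntegral_mono_on integrable_stdPhi.integrableOn
      ((integrable_neg_mul_stdPhi.div_const s).congr (by
        filter_upwards with t; ring)).integrableOn
      measurableSet_Iic fun t ht => ?_
    have h2 : 1 ≤ -t / s := by
      rw [le_div_iff₀ hs]
      have := ht.out
      linarith
    nlinarith [stdPhi_pos t]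
  have h2 : ∫ t in Iic (-s), (-t / s) * stdPhi t = stdPhi (-s) / s := by
    rw [← integral_Iic_neg_mul_stdPhi (-s), ← integral_div]
    congr 1 with t; ring
  calc stdCdf (-s) ≤ stdPhi (-s) / s := h1.trans_eq h2
    _ = stdPhi s / s := by rw [stdPhi_even]

lemma snPdf_cont (l : ℝ) : Continuous (snPdf l) :=
  (continuous_const.mul stdPhi_cont).mul (stdCdf_cont.comp (continuous_const.mul continuous_id))

lemma snPdf_pos (l x : ℝ) : 0 < snPdf l x := by
  have := stdPhi_pos x; have := stdCdf_pos (l * x); unfold snPdf; positivity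

lemma snPdf_le (l x : ℝ) : snPdf l x ≤ 2 * stdPhi x := by
  have h1 := stdCdf_le_one (l * x)
  have h2 := stdPhi_pos x
  unfold snPdf; nlinarith

lemma integrable_snPdf (l : ℝ) : Integrable (snPdf l) := by
  refine Integrable.mono' (integrable_stdPhi.const_mul 2)
    (snPdf_cont l).aestronglyMeasurable ?_
  filter_upwards with x
  rw [Real.norm_eq_abs, abs_of_pos (snPdf_pos l x)]
  exact snPdf_le l x

lemma stdCdf_add_Ioi (y : ℝ) : stdCdf y + ∫ t in Ioi y, stdPhi t = 1 := by
  rw [stdCdf, intervalIntegral.integral_Iic_add_Ioi integrable_stdPhi.integrableOn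
    integrable_stdPhi.integrableOn, integral_stdPhi]

lemma stdCdf_neg (y : ℝ) : stdCdf (-y) = 1 - stdCdf y := by
  have h : stdCdf (-y) = ∫ t in Ioi y, stdPhi t := by
    rw [stdCdf]
    have h0 : ∀ t : ℝ, stdPhi t = stdPhi (-t) := fun t => (stdPhi_even t).symm
    calc ∫ t in Iic (-y), stdPhi t = ∫ t in Iic (-y), stdPhi (-t) := by
          exact setIntegral_congr_fun measurableSet_Iic fun t _ => h0 t
      _ = ∫ t in Ioi (- -y), stdPhi t := integral_comp_neg_Iic (-y) stdPhi
      _ = ∫ t in Ioi y, stdPhi t := by rw [neg_neg]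
  have := stdCdf_add_Ioi y
  linarith

lemma integral_snPdf (l : ℝ) : ∫ x, snPdf l x = 1 := by
  have hneg : Integrable (fun x => snPdf l (-x)) := (integrable_snPdf l).comp_neg
  have h1 : ∫ x, snPdf l x = ∫ x, snPdf l (-x) := (integral_neg_eq_self (snPdf l) volume).symm
  have h2 : ∀ x, snPdf l (-x) = 2 * stdPhi x - snPdf l x := by
    intro x
    unfold snPdf
    rw [stdPhi_even, mul_neg, stdCdf_neg]
    ring
  have h3 : ∫ x, snPdf l (-x) = 2 * (∫ x, stdPhi x) - ∫ x, snPdf l x := by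
    rw [← integral_const_mul, ← integral_sub (integrable_stdPhi.const_mul 2) (integrable_snPdf l)]
    exact integral_congr_ae (Filter.Eventually.of_forall h2)
  rw [integral_stdPhi] at h3
  linarith [h1.trans h3]

lemma hasDerivAt_snCdf (l x : ℝ) : HasDerivAt (snCdf l) (snPdf l x) x := by
  have key : ∀ u : ℝ, snCdf l u = snCdf l (x - 1) + ∫ t in (x-1)..u, snPdf l t := by
    intro u
    rw [← intervalIntegral.integral_Iic_sub_Iic (integrable_snPdf l).integrableOn
      (integrable_snPdf l).integrableOn]
    unfold snCdf; ring
  have h : HasDerivAt (fun u => snCdf l (x - 1) + ∫ t in (x-1)..u, snPdf l t) (snPdf l x) x := by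
    refine HasDerivAt.const_add _ ?_
    exact intervalIntegral.integral_hasDerivAt_right
      (integrable_snPdf l).intervalIntegrable
      ((snPdf_cont l).stronglyMeasurable.stronglyMeasurableAtFilter)
      (snPdf_cont l).continuousAt
  exact h.congr_of_eventuallyEq (Filter.Eventually.of_forall key)

lemma snCdf_add_Ioi (l y : ℝ) : snCdf l y + ∫ t in Ioi y, snPdf l t = 1 := by
  rw [snCdf, intervalIntegral.integral_Iic_add_Ioi (integrable_snPdf l).integrableOn
    (integrable_snPdf l).integrableOn, integral_snPdf]

lemma stdCdf_neg_tendsto : Tendsto (fun t : ℝ => stdCdf (-t)) atTop (𝓝 0) := by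
  have h1 : ∀ᶠ t : ℝ in atTop, stdCdf (-t) ≤ stdPhi t := by
    filter_upwards [eventually_ge_atTop (1:ℝ)] with t ht
    calc stdCdf (-t) ≤ stdPhi t / t := stdCdf_neg_le t (by linarith)
      _ ≤ stdPhi t := by
          rw [div_le_iff₀ (by linarith)]
          nlinarith [stdPhi_pos t]
  have h2 : ∀ᶠ t : ℝ in atTop, 0 ≤ stdCdf (-t) :=
    Filter.Eventually.of_forall fun t => stdCdf_nonneg (-t)
  exact tendsto_of_tendsto_of_tendsto_of_le_of_le' tendsto_const_nhds
    stdPhi_tendsto_atTop h2 h1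

lemma snCdf_tendsto_one (l : ℝ) : Tendsto (snCdf l) atTop (𝓝 1) := by
  have key : ∀ t : ℝ, 1 - snCdf l t ≤ 2 * stdCdf (-t) := by
    intro t
    have h1 : (∫ u in Ioi t, snPdf l u) ≤ ∫ u in Ioi t, 2 * stdPhi u :=
      setIntegral_mono_on (integrable_snPdf l).integrableOn
        ((integrable_stdPhi.const_mul 2).integrableOn) measurableSet_Ioi
        fun u _ => snPdf_le l u
    have h2 : (∫ u in Ioi t, 2 * stdPhi u) = 2 * stdCdf (-t) := by
      rw [integral_const_mul]
      have h3 : stdCdf (-t) = ∫ u in Ioi t, stdPhi u := by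
        rw [stdCdf_neg]
        have := stdCdf_add_Ioi t; linarith
      rw [h3]
    have := snCdf_add_Ioi l t
    linarith [h1.trans_eq h2]
  have hub : ∀ t : ℝ, snCdf l t ≤ 1 := by
    intro t
    have h0 : 0 ≤ ∫ u in Ioi t, snPdf l u :=
      setIntegral_nonneg measurableSet_Ioi fun u _ => (snPdf_pos l u).le
    have := snCdf_add_Ioi l t; linarith
  have hl2 : Tendsto (fun t : ℝ => 1 - 2 * stdCdf (-t)) atTop (𝓝 1) := by
    have := stdCdf_neg_tendsto.const_mul 2
    have h := (tendsto_const_nhds (x := (1:ℝ)) (f := atTop)).sub this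
    simpa using h
  refine tendsto_of_tendsto_of_tendsto_of_le_of_le hl2 tendsto_const_nhds (fun t => ?_) hub
  show 1 - 2 * stdCdf (-t) ≤ snCdf l t
  have := key t; linarith

lemma hasDerivAt_snPdf (l x : ℝ) :
    HasDerivAt (snPdf l) (-x * snPdf l x + 2 * l * stdPhi x * stdPhi (l * x)) x := by
  have h1 : HasDerivAt (fun y : ℝ => 2 * stdPhi y) (2 * (-x * stdPhi x)) x :=
    (hasDerivAt_stdPhi x).const_mul 2
  have hlin : HasDerivAt (fun y : ℝ => l * y) l x := by
    simpa using (hasDerivAt_id x).const_mul l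
  have h2 : HasDerivAt (fun y : ℝ => stdCdf (l * y)) (stdPhi (l * x) * l) x :=
    HasDerivAt.comp x (hasDerivAt_stdCdf (l * x)) hlin
  have h := h1.mul h2
  exact h.congr_deriv (by unfold snPdf; ring)

/-- The comparison function. -/
noncomputable def Gfun (l t : ℝ) : ℝ := (t ^ 2 + 1) / ((1 + l ^ 2) * t ^ 3 + t)

noncomputable def Gfun' (l t : ℝ) : ℝ :=
  (2 * t * ((1 + l ^ 2) * t ^ 3 + t) - (t ^ 2 + 1) * (3 * (1 + l ^ 2) * t ^ 2 + 1)) /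
    ((1 + l ^ 2) * t ^ 3 + t) ^ 2

lemma denom_pos (l : ℝ) {t : ℝ} (ht : 0 < t) : 0 < (1 + l ^ 2) * t ^ 3 + t := by positivity

lemma hasDerivAt_Gfun (l : ℝ) {t : ℝ} (ht : 0 < t) : HasDerivAt (Gfun l) (Gfun' l t) t := by
  have hnum : HasDerivAt (fun y : ℝ => y ^ 2 + 1) (2 * t) t := by
    simpa using (hasDerivAt_pow 2 t).add_const 1
  have hden : HasDerivAt (fun y : ℝ => (1 + l ^ 2) * y ^ 3 + y)
      (3 * (1 + l ^ 2) * t ^ 2 + 1) t := by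
    have h3 : HasDerivAt (fun y : ℝ => (1 + l ^ 2) * y ^ 3) ((1 + l ^ 2) * (3 * t ^ 2)) t := by
      simpa using ((hasDerivAt_pow 3 t).const_mul (1 + l ^ 2))
    have := h3.add (hasDerivAt_id t)
    exact this.congr_deriv (by ring)
  exact hnum.div hden (denom_pos l ht).ne'

lemma Gfun_pos (l : ℝ) {t : ℝ} (ht : 0 < t) : 0 < Gfun l t := by
  unfold Gfun
  have := denom_pos l ht
  positivity

lemma Gfun_ineq (l : ℝ) {t : ℝ} (ht : 0 < t) :
    1 + Gfun' l t - t * Gfun l t < l ^ 2 * t * Gfun l t := by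
  have hd := denom_pos l ht
  have key : l ^ 2 * t * Gfun l t - (1 + Gfun' l t - t * Gfun l t) =
      (l ^ 2 * t ^ 2 * ((1 + l ^ 2) * t ^ 2 + 1) + (1 + l ^ 2) * t ^ 4 +
        (3 * (1 + l ^ 2) - 1) * t ^ 2 + 1) / ((1 + l ^ 2) * t ^ 3 + t) ^ 2 := by
    unfold Gfun Gfun'
    field_simp
    ring
  have hpos : 0 < (l ^ 2 * t ^ 2 * ((1 + l ^ 2) * t ^ 2 + 1) + (1 + l ^ 2) * t ^ 4 +
      (3 * (1 + l ^ 2) - 1) * t ^ 2 + 1) / ((1 + l ^ 2) * t ^ 3 + t) ^ 2 := by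
    have h1 : (0:ℝ) < 3 * (1 + l ^ 2) - 1 := by nlinarith [sq_nonneg l]
    positivity
  linarith [key ▸ hpos]

/-- The key pointwise derivative inequality. -/
lemma deriv_neg_key (l : ℝ) (hl : l < 0) {t : ℝ} (ht : 0 < t) :
    (-t * snPdf l t + 2 * l * stdPhi t * stdPhi (l * t)) * Gfun l t
      + snPdf l t * Gfun' l t + snPdf l t < 0 := by
  set A := 1 + Gfun' l t - t * Gfun l t with hA
  set B := Gfun l t with hB
  have hBpos : 0 < B := Gfun_pos l ht
  have hφt := stdPhi_pos t
  have hφlt := stdPhi_pos (l * t)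
  have hΦpos := stdCdf_pos (l * t)
  have key : stdCdf (l * t) * A < (-l) * stdPhi (l * t) * B := by
    rcases le_or_gt A 0 with hA0 | hA0
    · have h1 : stdCdf (l * t) * A ≤ 0 := mul_nonpos_of_nonneg_of_nonpos hΦpos.le hA0
      have h2 : 0 < (-l) * stdPhi (l * t) * B :=
        mul_pos (mul_pos (neg_pos.2 hl) hφlt) hBpos
      linarith
    · -- A > 0 : use Mills bound
      have hs : 0 < -(l * t) := by nlinarith
      have hmills : stdCdf (l * t) ≤ stdPhi (-(l * t)) / (-(l * t)) := by
        have := stdCdf_neg_le (-(l * t)) hs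
        simpa using this
      rw [stdPhi_even] at hmills
      have h1 : stdCdf (l * t) * A ≤ stdPhi (l * t) / (-(l * t)) * A :=
        mul_le_mul_of_nonneg_right hmills hA0.le
      have h2 : stdPhi (l * t) / (-(l * t)) * A < stdPhi (l * t) / (-(l * t)) * (l ^ 2 * t * B) := by
        have hc : 0 < stdPhi (l * t) / (-(l * t)) := by positivity
        exact mul_lt_mul_of_pos_left (Gfun_ineq l ht) hc
      have h3 : stdPhi (l * t) / (-(l * t)) * (l ^ 2 * t * B) = (-l) * stdPhi (l * t) * B := by
        field_simp
      linarith [h1.trans_lt (h2.trans_eq h3)]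
  have expand : (-t * snPdf l t + 2 * l * stdPhi t * stdPhi (l * t)) * Gfun l t
      + snPdf l t * Gfun' l t + snPdf l t
      = 2 * stdPhi t * (stdCdf (l * t) * A - (-l) * stdPhi (l * t) * B) := by
    unfold snPdf
    rw [hA, hB]
    ring
  rw [expand]
  nlinarith [key]

lemma Gfun_le_inv (l : ℝ) {t : ℝ} (ht : 1 ≤ t) : Gfun l t ≤ 1 := by
  have htpos : (0:ℝ) < t := lt_of_lt_of_le one_pos ht
  have hd := denom_pos l htpos
  rw [Gfun, div_le_one hd]
  nlinarith [mul_nonneg (sub_nonneg.2 ht) (add_nonneg (sq_nonneg t) zero_le_one),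
    mul_nonneg (sq_nonneg l) (pow_pos htpos 3).le]

theorem skew_normal_mills_upper_neg (l : ℝ) (hl : l < 0) (x : ℝ) (hx : 0 < x) :
    (1 - snCdf l x) / snPdf l x <
      x⁻¹ * (1 - (l ^ 2 / (1 + l ^ 2)) * (1 + 1 / ((1 + l ^ 2) * x ^ 2))⁻¹) := by
  set H : ℝ → ℝ := fun t => snPdf l t * Gfun l t + snCdf l t with hH
  have hderiv : ∀ t : ℝ, 0 < t → HasDerivAt H
      ((-t * snPdf l t + 2 * l * stdPhi t * stdPhi (l * t)) * Gfun l t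
        + snPdf l t * Gfun' l t + snPdf l t) t := by
    intro t ht
    have h1 := (hasDerivAt_snPdf l t).mul (hasDerivAt_Gfun l ht)
    exact h1.add (hasDerivAt_snCdf l t)
  have hanti : StrictAntiOn H (Ici x) := by
    apply strictAntiOn_of_deriv_neg (convex_Ici x)
    · intro t ht
      exact ((hderiv t (lt_of_lt_of_le hx ht)).continuousAt).continuousWithinAt
    · intro t ht
      rw [interior_Ici] at ht
      have htpos : 0 < t := hx.trans ht
      rw [(hderiv t htpos).deriv]
      exact deriv_neg_key l hl htpos
  have htend : Tendsto H atTop (𝓝 1) := by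
    have h1 : Tendsto (fun t => snPdf l t * Gfun l t) atTop (𝓝 0) := by
      have hub : ∀ᶠ t : ℝ in atTop, snPdf l t * Gfun l t ≤ 2 * stdPhi t := by
        filter_upwards [eventually_ge_atTop (1:ℝ)] with t ht
        have h1 := Gfun_le_inv l ht
        have h2 := snPdf_le l t
        have h3 := snPdf_pos l t
        have h4 := Gfun_pos l (lt_of_lt_of_le one_pos ht)
        nlinarith
      have hlb : ∀ᶠ t : ℝ in atTop, 0 ≤ snPdf l t * Gfun l t := by
        filter_upwards [eventually_ge_atTop (1:ℝ)] with t ht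
        exact (mul_pos (snPdf_pos l t) (Gfun_pos l (lt_of_lt_of_le one_pos ht))).le
      have hφ : Tendsto (fun t : ℝ => 2 * stdPhi t) atTop (𝓝 0) := by
        have := stdPhi_tendsto_atTop.const_mul 2
        simpa using this
      exact tendsto_of_tendsto_of_tendsto_of_le_of_le' tendsto_const_nhds hφ hlb hub
    have h2 := h1.add (snCdf_tendsto_one l)
    simpa using h2
  have hx1 : (1:ℝ) ≤ H (x + 1) := by
    refine le_of_tendsto htend ?_
    filter_upwards [eventually_ge_atTop (x + 1)] with t ht
    rcases eq_or_lt_of_le ht with rfl | hlt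
    · exact le_refl _
    · exact (hanti (by simp : x + 1 ∈ Ici x) (by simp only [mem_Ici]; linarith) hlt).le
  have h3 : H (x + 1) < H x :=
    hanti (le_refl x : x ∈ Ici x) (by simp : x + 1 ∈ Ici x) (by linarith)
  have hkey : 1 - snCdf l x < snPdf l x * Gfun l x := by
    have h4 : snPdf l x * Gfun l x + snCdf l x = H x := rfl
    have h5 : (1:ℝ) < snPdf l x * Gfun l x + snCdf l x := by
      rw [h4]; exact lt_of_le_of_lt hx1 h3
    linarith
  have hpdf := snPdf_pos l x
  have hG : x⁻¹ * (1 - (l ^ 2 / (1 + l ^ 2)) * (1 + 1 / ((1 + l ^ 2) * x ^ 2))⁻¹)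
      = Gfun l x := by
    have h1 : (0:ℝ) < 1 + l ^ 2 := by positivity
    have h2 : (0:ℝ) < (1 + l ^ 2) * x ^ 2 := by positivity
    have h3 : (0:ℝ) < 1 + 1 / ((1 + l ^ 2) * x ^ 2) := by positivity
    have hd := denom_pos l hx
    rw [Gfun]
    field_simp
    ring
  rw [hG, div_lt_iff₀ hpdf]
  linarith [hkey]
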